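/- Let γ be a simple closed curve in ℝᵈ (d ≥ 4 or d = 3) such that for i = 1, 2, 3 the i-th coordinate shadow πᵢ(γ) is a simple path (homeomorphic image of [0,1]). Then there is no point q₀ on γ such that πᵢ(q₀) is an endpoint of the path πᵢ(γ) for all three indices i = 1, 2, 3. -/

import Mathlib

open Real unitInterval

/-- Orthogonal projection of `ℝᵈ` onto the coordinate hyperplane `{x : xᵢ = 0}`. -/
noncomputable def coordProj {d : ℕ} (i : Fin d) (x : EuclideanSpace ℝ (Fin d)) :
    EuclideanSpace ℝ (Fin d) :=
  WithLp.toLp 2 (Function.update x i 0)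

section Core

open Set

lemma core_no_increase (U V A B : ℝ → ℝ) (hU : Continuous U) (hV : Continuous V)
    (hA : Continuous A) (hB : Continuous B)
    (hUr : ∀ t, U t ∈ Icc (0:ℝ) 1) (hVr : ∀ t, V t ∈ Icc (0:ℝ) 1)
    (hU0 : U 0 = 0) (hU1 : U 1 = 0) (hV0 : V 0 = 0) (hV1 : V 1 = 0)
    (hAB : ∀ t, A (U t) = B (V t))
    (hinj : ∀ s t, s ∈ Ico (0:ℝ) 1 → t ∈ Ico (0:ℝ) 1 → U s = U t → V s = V t → s = t)
    (τ : ℝ) (hτ : τ ∈ Ioo (0:ℝ) 1) (hgt : A 0 < A (U τ)) : False := by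
  set ψ : ℝ → ℝ := fun t => A (U t) with hψdef
  have hψc : Continuous ψ := hA.comp hU
  have hψ0 : ψ 0 = A 0 := by simp only [hψdef, hU0]
  have hψ1 : ψ 1 = A 0 := by simp only [hψdef, hU1]
  set c : ℝ := (A 0 + ψ τ) / 2 with hcdef
  have hgt' : A 0 < ψ τ := hgt
  have hc1 : A 0 < c := by rw [hcdef]; linarith
  have hc2 : c < ψ τ := by rw [hcdef]; linarith
  have hBV0 : B 0 = A 0 := by
    have := hAB 0; rw [hU0, hV0] at this; exact this.symm
  -- level set of A
  set SA : Set ℝ := Icc 0 1 ∩ A ⁻¹' {c} with hSAdef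
  have hSAne : SA.Nonempty := by
    obtain ⟨x, hx1, hx2⟩ := intermediate_value_Icc (hUr τ).1 hA.continuousOn
      ⟨le_of_lt hc1, le_of_lt hc2⟩
    exact ⟨x, ⟨hx1.1, hx1.2.trans (hUr τ).2⟩, hx2⟩
  have hSAcl : IsClosed SA := isClosed_Icc.inter (isClosed_singleton.preimage hA)
  have hSAbdd : BddBelow SA := ⟨0, fun y hy => hy.1.1⟩
  set u₀ : ℝ := sInf SA with hu₀def
  have hu₀ : u₀ ∈ SA := hSAcl.csInf_mem hSAne hSAbdd
  have hu₀c : A u₀ = c := hu₀.2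
  have hAlt : ∀ y, 0 ≤ y → y < u₀ → A y < c := by
    intro y h0 hy
    by_contra h
    push_neg at h
    obtain ⟨x', hx'1, hx'2⟩ := intermediate_value_Icc h0 hA.continuousOn ⟨le_of_lt hc1, h⟩
    have hle : u₀ ≤ x' :=
      csInf_le hSAbdd ⟨⟨hx'1.1, hx'1.2.trans (le_of_lt (hy.trans_le hu₀.1.2))⟩, hx'2⟩
    linarith [hx'1.2]
  -- level set of B
  set SB : Set ℝ := Icc 0 1 ∩ B ⁻¹' {c} with hSBdef
  have hψτB : B (V τ) = ψ τ := (hAB τ).symm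
  have hB0c : B 0 ≤ c := by rw [hBV0]; exact le_of_lt hc1
  have hcBVτ : c ≤ B (V τ) := by rw [hψτB]; exact le_of_lt hc2
  have hSBne : SB.Nonempty := by
    obtain ⟨x, hx1, hx2⟩ := intermediate_value_Icc (hVr τ).1 hB.continuousOn ⟨hB0c, hcBVτ⟩
    exact ⟨x, ⟨hx1.1, hx1.2.trans (hVr τ).2⟩, hx2⟩
  have hSBcl : IsClosed SB := isClosed_Icc.inter (isClosed_singleton.preimage hB)
  have hSBbdd : BddBelow SB := ⟨0, fun y hy => hy.1.1⟩
  set v₀ : ℝ := sInf SB with hv₀def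
  have hv₀ : v₀ ∈ SB := hSBcl.csInf_mem hSBne hSBbdd
  have hv₀c : B v₀ = c := hv₀.2
  have hBlt : ∀ y, 0 ≤ y → y < v₀ → B y < c := by
    intro y h0 hy
    by_contra h
    push_neg at h
    obtain ⟨x', hx'1, hx'2⟩ := intermediate_value_Icc h0 hB.continuousOn ⟨hB0c, h⟩
    have hle : v₀ ≤ x' :=
      csInf_le hSBbdd ⟨⟨hx'1.1, hx'1.2.trans (le_of_lt (hy.trans_le hv₀.1.2))⟩, hx'2⟩
    linarith [hx'1.2]
  -- level set of ψ
  set Sψ : Set ℝ := Icc 0 1 ∩ ψ ⁻¹' {c} with hSψdef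
  have hSψcl : IsClosed Sψ := isClosed_Icc.inter (isClosed_singleton.preimage hψc)
  have hSψbdd : BddBelow Sψ := ⟨0, fun y hy => hy.1.1⟩
  have hSψbdd' : BddAbove Sψ := ⟨1, fun y hy => hy.1.2⟩
  obtain ⟨s₁, hs₁1, hs₁2⟩ := intermediate_value_Ioo (le_of_lt hτ.1) hψc.continuousOn
    (show c ∈ Ioo (ψ 0) (ψ τ) from ⟨by rw [hψ0]; exact hc1, hc2⟩)
  obtain ⟨s₂, hs₂1, hs₂2⟩ := intermediate_value_Ioo' (le_of_lt hτ.2) hψc.continuousOn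
    (show c ∈ Ioo (ψ 1) (ψ τ) from ⟨by rw [hψ1]; exact hc1, hc2⟩)
  have hs₁mem : s₁ ∈ Sψ := ⟨⟨le_of_lt hs₁1.1, le_of_lt (hs₁1.2.trans hτ.2)⟩, hs₁2⟩
  have hs₂mem : s₂ ∈ Sψ := ⟨⟨le_of_lt (hτ.1.trans hs₂1.1), le_of_lt hs₂1.2⟩, hs₂2⟩
  set t₁ : ℝ := sInf Sψ with ht₁def
  set t₂ : ℝ := sSup Sψ with ht₂def
  have ht₁ : t₁ ∈ Sψ := hSψcl.csInf_mem ⟨s₁, hs₁mem⟩ hSψbdd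
  have ht₂ : t₂ ∈ Sψ := hSψcl.csSup_mem ⟨s₂, hs₂mem⟩ hSψbdd'
  have ht₁τ : t₁ < τ := lt_of_le_of_lt (csInf_le hSψbdd hs₁mem) hs₁1.2
  have ht₂τ : τ < t₂ := lt_of_lt_of_le hs₂1.1 (le_csSup hSψbdd' hs₂mem)
  have hψt₁ : A (U t₁) = c := ht₁.2
  have hψt₂ : A (U t₂) = c := ht₂.2
  have hψt₁B : B (V t₁) = c := by rw [← hAB t₁]; exact hψt₁
  have hψt₂B : B (V t₂) = c := by rw [← hAB t₂]; exact hψt₂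
  -- U t₁ = u₀
  have hUt₁ : U t₁ = u₀ := by
    have hge : u₀ ≤ U t₁ := by
      by_contra h
      push_neg at h
      exact absurd hψt₁ (ne_of_lt (hAlt _ (hUr t₁).1 h))
    rcases eq_or_lt_of_le hge with h | h
    · exact h.symm
    · exfalso
      obtain ⟨t', ht'1, ht'2⟩ := intermediate_value_Icc ht₁.1.1 hU.continuousOn
        (show u₀ ∈ Icc (U 0) (U t₁) from ⟨by rw [hU0]; exact hu₀.1.1, le_of_lt h⟩)
      have ht'mem : t' ∈ Sψ := ⟨⟨ht'1.1, ht'1.2.trans ht₁.1.2⟩, by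
        show A (U t') = c; rw [ht'2]; exact hu₀c⟩
      have h1 : t₁ ≤ t' := csInf_le hSψbdd ht'mem
      have h2 : t' = t₁ := le_antisymm ht'1.2 h1
      rw [h2] at ht'2
      rw [ht'2] at h
      exact lt_irrefl _ h
  have hVt₁ : V t₁ = v₀ := by
    have hge : v₀ ≤ V t₁ := by
      by_contra h
      push_neg at h
      exact absurd hψt₁B (ne_of_lt (hBlt _ (hVr t₁).1 h))
    rcases eq_or_lt_of_le hge with h | h
    · exact h.symm
    · exfalso
      obtain ⟨t', ht'1, ht'2⟩ := intermediate_value_Icc ht₁.1.1 hV.continuousOn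
        (show v₀ ∈ Icc (V 0) (V t₁) from ⟨by rw [hV0]; exact hv₀.1.1, le_of_lt h⟩)
      have ht'mem : t' ∈ Sψ := ⟨⟨ht'1.1, ht'1.2.trans ht₁.1.2⟩, by
        show A (U t') = c; rw [hAB t', ht'2]; exact hv₀c⟩
      have h1 : t₁ ≤ t' := csInf_le hSψbdd ht'mem
      have h2 : t' = t₁ := le_antisymm ht'1.2 h1
      rw [h2] at ht'2
      rw [ht'2] at h
      exact lt_irrefl _ h
  have hUt₂ : U t₂ = u₀ := by
    have hge : u₀ ≤ U t₂ := by
      by_contra h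
      push_neg at h
      exact absurd hψt₂ (ne_of_lt (hAlt _ (hUr t₂).1 h))
    rcases eq_or_lt_of_le hge with h | h
    · exact h.symm
    · exfalso
      obtain ⟨t', ht'1, ht'2⟩ := intermediate_value_Icc' ht₂.1.2 hU.continuousOn
        (show u₀ ∈ Icc (U 1) (U t₂) from ⟨by rw [hU1]; exact hu₀.1.1, le_of_lt h⟩)
      have ht'mem : t' ∈ Sψ := ⟨⟨ht₂.1.1.trans ht'1.1, ht'1.2⟩, by
        show A (U t') = c; rw [ht'2]; exact hu₀c⟩
      have h1 : t' ≤ t₂ := le_csSup hSψbdd' ht'mem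
      have h2 : t' = t₂ := le_antisymm h1 ht'1.1
      rw [h2] at ht'2
      rw [ht'2] at h
      exact lt_irrefl _ h
  have hVt₂ : V t₂ = v₀ := by
    have hge : v₀ ≤ V t₂ := by
      by_contra h
      push_neg at h
      exact absurd hψt₂B (ne_of_lt (hBlt _ (hVr t₂).1 h))
    rcases eq_or_lt_of_le hge with h | h
    · exact h.symm
    · exfalso
      obtain ⟨t', ht'1, ht'2⟩ := intermediate_value_Icc' ht₂.1.2 hV.continuousOn
        (show v₀ ∈ Icc (V 1) (V t₂) from ⟨by rw [hV1]; exact hv₀.1.1, le_of_lt h⟩)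
      have ht'mem : t' ∈ Sψ := ⟨⟨ht₂.1.1.trans ht'1.1, ht'1.2⟩, by
        show A (U t') = c; rw [hAB t', ht'2]; exact hv₀c⟩
      have h1 : t' ≤ t₂ := le_csSup hSψbdd' ht'mem
      have h2 : t' = t₂ := le_antisymm h1 ht'1.1
      rw [h2] at ht'2
      rw [ht'2] at h
      exact lt_irrefl _ h
  have ht₂1 : t₂ < 1 := by
    rcases eq_or_lt_of_le ht₂.1.2 with h | h
    · exfalso
      have : ψ t₂ = c := ht₂.2
      rw [h, hψ1] at this
      linarith
    · exact h
  have heq : t₁ = t₂ :=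
    hinj t₁ t₂ ⟨ht₁.1.1, lt_trans ht₁τ hτ.2⟩ ⟨ht₂.1.1, ht₂1⟩
      (hUt₁.trans hUt₂.symm) (hVt₁.trans hVt₂.symm)
  linarith

/-- Continuity of the coordinate projection. -/
lemma coordProj_continuous {d : ℕ} (i : Fin d) : Continuous (coordProj i) := by
  have h1 : Continuous fun x : (Fin d) → ℝ => Function.update x i 0 := by
    apply continuous_pi
    intro m
    rcases eq_or_ne m i with h | h
    · subst h
      simp only [Function.update_self]
      exact continuous_const
    · simp only [Function.update_of_ne h]
      exact continuous_apply m
  exact (PiLp.continuous_toLp 2 (fun _ : Fin d => ℝ)).comp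
    (h1.comp (PiLp.continuous_ofLp 2 (fun _ : Fin d => ℝ)))

lemma coordProj_apply_ne {d : ℕ} (i : Fin d) (x : EuclideanSpace ℝ (Fin d)) (m : Fin d)
    (hm : m ≠ i) : coordProj i x m = x m :=
  Function.update_of_ne hm 0 x

end Core

/-- If `γ` is a simple closed curve in `ℝᵈ` whose first three coordinate shadows are
simple paths (parameterized by embeddings `lam j` of the unit interval), then there is no
point of the curve projecting to an endpoint of each of the three paths. -/
theorem no_common_endpoint_point (d : ℕ) (hd : 3 ≤ d)
    (γ : Circle → EuclideanSpace ℝ (Fin d)) (hγ : Topology.IsEmbedding γ)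
    (lam : Fin 3 → I → EuclideanSpace ℝ (Fin d))
    (hlam : ∀ j : Fin 3, Topology.IsEmbedding (lam j))
    (hrange : ∀ j : Fin 3,
      Set.range (lam j) = coordProj ⟨j, lt_of_lt_of_le j.isLt hd⟩ '' Set.range γ) :
    ¬ ∃ z : Circle, ∀ j : Fin 3,
        coordProj ⟨j, lt_of_lt_of_le j.isLt hd⟩ (γ z) = lam j 0 ∨
        coordProj ⟨j, lt_of_lt_of_le j.isLt hd⟩ (γ z) = lam j 1 := by
  classical
  rintro ⟨z, hz⟩
  set ι : Fin 3 → Fin d := fun j => ⟨j, lt_of_lt_of_le j.isLt hd⟩ with hιdef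
  have hz' : ∀ j : Fin 3, coordProj (ι j) (γ z) = lam j 0 ∨ coordProj (ι j) (γ z) = lam j 1 := hz
  have hrange' : ∀ j : Fin 3, Set.range (lam j) = coordProj (ι j) '' Set.range γ := hrange
  have hιinj : Function.Injective ι := by
    intro a b h
    have h2 : ((ι a : Fin d) : ℕ) = ((ι b : Fin d) : ℕ) := congrArg Fin.val h
    exact Fin.ext h2
  have hιne : ∀ j k : Fin 3, j ≠ k → ι j ≠ ι k := fun j k h hh => h (hιinj hh)
  -- the parameter functions g j
  have hmem : ∀ (j : Fin 3) (θ : Circle), ∃ y : I, lam j y = coordProj (ι j) (γ θ) := by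
    intro j θ
    have : coordProj (ι j) (γ θ) ∈ Set.range (lam j) := by
      rw [hrange' j]
      exact ⟨γ θ, ⟨θ, rfl⟩, rfl⟩
    exact this
  choose g hg using hmem
  have hgc : ∀ j, Continuous (g j) := by
    intro j
    rw [(hlam j).toIsInducing.continuous_iff]
    have : (lam j ∘ g j) = fun θ => coordProj (ι j) (γ θ) := funext fun θ => hg j θ
    rw [this]
    exact (coordProj_continuous (ι j)).comp hγ.continuous
  have hgz : ∀ j, g j z = 0 ∨ g j z = 1 := by
    intro j
    rcases hz' j with h | h
    · left; exact (hlam j).injective (by rw [hg j z, h])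
    · right; exact (hlam j).injective (by rw [hg j z, h])
  -- flips
  set F : Fin 3 → I → I := fun j x => if g j z = 1 then unitInterval.symm x else x with hFdef
  have hFz : ∀ j, F j (g j z) = 0 := by
    intro j
    by_cases h : g j z = 1
    · simp only [hFdef, if_pos h, h, unitInterval.symm_one]
    · rcases hgz j with h0 | h1
      · simp only [hFdef, if_neg h, h0]
      · exact absurd h1 h
  have hFinj : ∀ j, Function.Injective (F j) := by
    intro j
    by_cases h : g j z = 1
    · simp only [hFdef, if_pos h]
      exact unitInterval.symm_involutive.injective
    · simp only [hFdef, if_neg h]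
      exact fun a b hab => hab
  have hFc : ∀ j, Continuous (F j) := by
    intro j
    by_cases h : g j z = 1
    · simp only [hFdef, if_pos h]
      exact unitInterval.continuous_symm
    · simp only [hFdef, if_neg h]
      exact continuous_id
  have hFF : ∀ j x, F j (F j x) = x := by
    intro j x
    by_cases h : g j z = 1
    · simp only [hFdef, if_pos h, unitInterval.symm_symm]
    · simp only [hFdef, if_neg h]
  -- real-valued parameter functions and coordinate functions
  set u : Fin 3 → Circle → ℝ := fun j θ => (F j (g j θ) : ℝ) with hudef
  set Af : Fin 3 → Fin d → ℝ → ℝ :=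
    fun j m x => lam j (F j (Set.projIcc 0 1 zero_le_one x)) m with hAfdef
  have huc : ∀ j, Continuous (u j) :=
    fun j => continuous_subtype_val.comp ((hFc j).comp (hgc j))
  have hur : ∀ j θ, u j θ ∈ Set.Icc (0:ℝ) 1 := fun j θ => (F j (g j θ)).2
  have huz : ∀ j, u j z = 0 := by
    intro j
    simp only [hudef, hFz j]
    rfl
  have hAfc : ∀ j m, Continuous (Af j m) := by
    intro j m
    exact (EuclideanSpace.proj m).continuous.comp
      ((hlam j).continuous.comp ((hFc j).comp continuous_projIcc))
  have hkey : ∀ (j : Fin 3) (m : Fin d) (θ : Circle), m ≠ ι j → Af j m (u j θ) = γ θ m := by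
    intro j m θ hm
    have h1 : Set.projIcc (0:ℝ) 1 zero_le_one ((F j (g j θ) : ℝ)) = F j (g j θ) :=
      Set.projIcc_val zero_le_one _
    simp only [hAfdef, hudef, h1, hFF]
    rw [hg j θ]
    exact coordProj_apply_ne (ι j) (γ θ) m hm
  -- joint injectivity
  have hcoord : ∀ (j : Fin 3) (m : Fin d) (θ : Circle), m ≠ ι j → (lam j (g j θ)) m = γ θ m := by
    intro j m θ hm
    rw [hg j θ]
    exact coordProj_apply_ne (ι j) (γ θ) m hm
  have hjoint : ∀ (j k : Fin 3), j ≠ k → ∀ θ θ' : Circle,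
      g j θ = g j θ' → g k θ = g k θ' → θ = θ' := by
    intro j k hjk θ θ' hj hk
    apply hγ.injective
    apply PiLp.ext
    intro m
    by_cases hmj : m = ι j
    · have hmk : m ≠ ι k := by rw [hmj]; exact hιne j k hjk
      rw [← hcoord k m θ hmk, ← hcoord k m θ' hmk, hk]
    · rw [← hcoord j m θ hmj, ← hcoord j m θ' hmj, hj]
  -- loop parametrization
  set P : ℝ → Circle := fun t => z * Circle.exp (2 * π * t) with hPdef
  have hPc : Continuous P :=
    continuous_const.mul (Circle.exp.continuous.comp (continuous_const.mul continuous_id))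
  have hP0 : P 0 = z := by
    simp only [hPdef, mul_zero, Circle.exp_zero, mul_one]
  have hP1 : P 1 = z := by
    simp only [hPdef, mul_one, Circle.exp_two_pi]
  have h2π : (2 * π) ≠ 0 := by positivity
  have hPinj : ∀ s t : ℝ, s ∈ Set.Ico (0:ℝ) 1 → t ∈ Set.Ico (0:ℝ) 1 → P s = P t → s = t := by
    intro s t hs ht h
    have h' : Circle.exp (2 * π * s) = Circle.exp (2 * π * t) := mul_left_cancel h
    obtain ⟨n, hn⟩ := Circle.exp_eq_exp.mp h'
    have hst : s = t + n := by
      apply mul_left_cancel₀ h2π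
      rw [hn]; ring
    have h1 : (n:ℝ) < 1 := by nlinarith [hs.1, hs.2, ht.1, ht.2]
    have h2 : (-1:ℝ) < (n:ℝ) := by nlinarith [hs.1, hs.2, ht.1, ht.2]
    have hn0 : n = 0 := by
      have hb1 : (-1:ℤ) < n := by exact_mod_cast h2
      have hb2 : n < (1:ℤ) := by exact_mod_cast h1
      omega
    rw [hn0] at hst
    simpa using hst
  have hPsurj : ∀ θ : Circle, ∃ t, t ∈ Set.Ico (0:ℝ) 1 ∧ P t = θ := by
    intro θ
    set s : ℝ := Complex.arg ((z⁻¹ * θ : Circle) : ℂ) with hsdef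
    have hexp : Circle.exp s = z⁻¹ * θ := Circle.exp_arg _
    refine ⟨Int.fract (s / (2 * π)), Set.mem_Ico.mpr ⟨Int.fract_nonneg _, Int.fract_lt_one _⟩, ?_⟩
    have h1 : Circle.exp (2 * π * Int.fract (s / (2 * π))) = Circle.exp s := by
      apply Circle.exp_eq_exp.mpr
      refine ⟨-⌊s / (2 * π)⌋, ?_⟩
      rw [Int.fract]
      push_cast
      field_simp
      ring
    simp only [hPdef]
    rw [h1, hexp, mul_inv_cancel_left]
  -- the main constancy claim
  have hconst : ∀ (j k : Fin 3), j ≠ k → ∀ (m : Fin d), m ≠ ι j → m ≠ ι k →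
      ∀ θ : Circle, γ θ m = γ z m := by
    intro j k hjk m hmj hmk θ
    by_contra hne
    obtain ⟨τ, hτmem, hPτ⟩ := hPsurj θ
    have hτ0 : τ ≠ 0 := by
      intro h
      rw [h, hP0] at hPτ
      rw [hPτ] at hne
      exact hne rfl
    have hτIoo : τ ∈ Set.Ioo (0:ℝ) 1 := ⟨lt_of_le_of_ne hτmem.1 (Ne.symm hτ0), hτmem.2⟩
    set U : ℝ → ℝ := fun t => u j (P t) with hUdef
    set V : ℝ → ℝ := fun t => u k (P t) with hVdef
    have hUc : Continuous U := (huc j).comp hPc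
    have hVc : Continuous V := (huc k).comp hPc
    have hUr : ∀ t, U t ∈ Set.Icc (0:ℝ) 1 := fun t => hur j (P t)
    have hVr : ∀ t, V t ∈ Set.Icc (0:ℝ) 1 := fun t => hur k (P t)
    have hU0 : U 0 = 0 := by simp only [hUdef, hP0, huz j]
    have hU1 : U 1 = 0 := by simp only [hUdef, hP1, huz j]
    have hV0 : V 0 = 0 := by simp only [hVdef, hP0, huz k]
    have hV1 : V 1 = 0 := by simp only [hVdef, hP1, huz k]
    have hAB : ∀ t, Af j m (U t) = Af k m (V t) := by
      intro t
      rw [hkey j m (P t) hmj, hkey k m (P t) hmk]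
    have hinj' : ∀ s t : ℝ, s ∈ Set.Ico (0:ℝ) 1 → t ∈ Set.Ico (0:ℝ) 1 →
        U s = U t → V s = V t → s = t := by
      intro s t hs ht hUst hVst
      apply hPinj s t hs ht
      apply hjoint j k hjk
      · exact hFinj j (Subtype.ext hUst)
      · exact hFinj k (Subtype.ext hVst)
    have hA0 : Af j m 0 = γ z m := by
      have : Af j m (U 0) = γ (P 0) m := hkey j m (P 0) hmj
      rw [hU0, hP0] at this
      exact this
    have hAτ : Af j m (U τ) = γ θ m := by
      have : Af j m (U τ) = γ (P τ) m := hkey j m (P τ) hmj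
      rw [hPτ] at this
      exact this
    rcases lt_or_gt_of_ne hne with hlt | hgt
    · -- γ θ m < γ z m : use negated functions
      refine core_no_increase U V (fun x => -(Af j m x)) (fun x => -(Af k m x))
        hUc hVc (hAfc j m).neg (hAfc k m).neg hUr hVr hU0 hU1 hV0 hV1
        (fun t => neg_inj.mpr (hAB t)) hinj' τ hτIoo ?_
      show -(Af j m 0) < -(Af j m (U τ))
      rw [hA0, hAτ]
      exact neg_lt_neg hlt
    · refine core_no_increase U V (Af j m) (Af k m)
        hUc hVc (hAfc j m) (hAfc k m) hUr hVr hU0 hU1 hV0 hV1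
        hAB hinj' τ hτIoo ?_
      rw [hA0, hAτ]
      exact hgt
  -- conclusion
  have hall : ∀ (m : Fin d) (θ : Circle), γ θ m = γ z m := by
    intro m θ
    by_cases h0 : m = ι 0
    · exact hconst 1 2 (by decide) m
        (by rw [h0]; exact hιne 0 1 (by decide)) (by rw [h0]; exact hιne 0 2 (by decide)) θ
    · by_cases h1 : m = ι 1
      · exact hconst 0 2 (by decide) m
          (by rw [h1]; exact hιne 1 0 (by decide)) (by rw [h1]; exact hιne 1 2 (by decide)) θ
      · exact hconst 0 1 (by decide) m h0 h1 θ
  have hhalf : γ (P (1/2)) = γ z := by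
    apply PiLp.ext
    intro m
    exact hall m (P (1/2))
  have heq : P (1/2) = P 0 := by
    rw [hP0]
    exact hγ.injective hhalf
  have : (1/2 : ℝ) = 0 :=
    hPinj (1/2) 0 ⟨by norm_num, by norm_num⟩ ⟨le_refl 0, zero_lt_one⟩ heq
  norm_num at this
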